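/- Let φ₀ > 0 and define P₀(θ) = -θ log(1+e^{-φ₀}) - log(1+e^{θφ₀}) for θ < -1, P₀(-1) = 0, and P₀(θ) = -(θ+1) log 2 for θ > -1. Then P₀ is concave on ℝ; its derivative on (-∞,-1) is θ ↦ -log(1+e^{-φ₀}) - φ₀/(1+e^{-θφ₀}), which is decreasing, and the left limit of P₀' at -1 is strictly greater than -log 2. -/

import Mathlib

noncomputable def P0 (φ₀ θ : ℝ) : ℝ :=
  if θ < -1 then -θ * Real.log (1 + Real.exp (-φ₀)) - Real.log (1 + Real.exp (θ * φ₀))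
  else if θ = -1 then 0
  else -(θ + 1) * Real.log 2

namespace Stmt13Aux
open Real

/-- The left branch, as a globally defined function. -/
noncomputable def f (φ₀ θ : ℝ) : ℝ :=
  -θ * log (1 + exp (-φ₀)) - log (1 + exp (θ * φ₀))

/-- Its derivative. -/
noncomputable def f' (φ₀ θ : ℝ) : ℝ :=
  -log (1 + exp (-φ₀)) - φ₀ / (1 + exp (-θ * φ₀))

lemma hasDerivAt_f (φ₀ θ : ℝ) : HasDerivAt (f φ₀) (f' φ₀ θ) θ := by
  have h1 : HasDerivAt (fun t : ℝ => t * φ₀) φ₀ θ := by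
    simpa using (hasDerivAt_id θ).mul_const φ₀
  have h2 : HasDerivAt (fun t : ℝ => exp (t * φ₀)) (exp (θ * φ₀) * φ₀) θ := h1.exp
  have h3 : HasDerivAt (fun t : ℝ => 1 + exp (t * φ₀)) (exp (θ * φ₀) * φ₀) θ := h2.const_add 1
  have hpos : (0:ℝ) < 1 + exp (θ * φ₀) := by positivity
  have h4 : HasDerivAt (fun t : ℝ => log (1 + exp (t * φ₀)))
      (exp (θ * φ₀) * φ₀ / (1 + exp (θ * φ₀))) θ := h3.log hpos.ne'
  have h5 : HasDerivAt (fun t : ℝ => -t * log (1 + exp (-φ₀))) (-log (1 + exp (-φ₀))) θ := by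
    simpa using ((hasDerivAt_id θ).neg.mul_const (log (1 + exp (-φ₀))))
  have h6 := h5.sub h4
  refine h6.congr_deriv ?_
  unfold f'
  have he : exp (-θ * φ₀) = (exp (θ * φ₀))⁻¹ := by
    rw [← exp_neg]; ring_nf
  rw [he]
  have h0 : exp (θ * φ₀) ≠ 0 := (exp_pos _).ne'
  field_simp
  ring

lemma f'_strictAnti {φ₀ : ℝ} (hφ₀ : 0 < φ₀) : StrictAnti (f' φ₀) := by
  intro a b hab
  unfold f'
  have h1 : exp (-b * φ₀) < exp (-a * φ₀) := exp_lt_exp.2 (by nlinarith)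
  have h2 : (0:ℝ) < 1 + exp (-b * φ₀) := by positivity
  have h3 : φ₀ / (1 + exp (-a * φ₀)) < φ₀ / (1 + exp (-b * φ₀)) :=
    div_lt_div_of_pos_left hφ₀ h2 (by linarith)
  linarith

lemma key4 {φ₀ : ℝ} (hφ₀ : 0 < φ₀) :
    -log (1 + exp (-φ₀)) - φ₀ / (1 + exp φ₀) > -log 2 := by
  set E := exp φ₀ with hE
  have hE0 : (0:ℝ) < E := exp_pos _
  have hE1 : (1:ℝ) < E := by rw [hE]; exact one_lt_exp_iff.2 hφ₀
  have hsinh : φ₀ < Real.sinh φ₀ := Real.self_lt_sinh_iff.2 hφ₀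
  rw [Real.sinh_eq] at hsinh
  have hinv : E * exp (-φ₀) = 1 := by rw [hE, ← exp_add]; simp
  have hq : 2 * φ₀ * E < E ^ 2 - 1 := by nlinarith [hsinh, hinv, hE0]
  have hEinv : exp (-φ₀) = E⁻¹ := by rw [hE, exp_neg]
  have hc : log (1 + exp (-φ₀)) = log (E + 1) - φ₀ := by
    rw [hEinv]
    have h1 : (1 : ℝ) + E⁻¹ = (E + 1) / E := by field_simp
    rw [h1, log_div (by positivity) hE0.ne', hE, log_exp]
  have hlog2 : log (E + 1) = log ((E + 1) / 2) + log 2 := by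
    rw [log_div (by positivity) two_ne_zero]; ring
  have hne : (E + 1) / (2 * E) ≠ 1 := by
    intro h
    rw [div_eq_one_iff_eq (by positivity : (0:ℝ) < 2 * E).ne'] at h
    nlinarith
  have hlogbound : log ((E + 1) / (2 * E)) < (E + 1) / (2 * E) - 1 :=
    log_lt_sub_one_of_pos (by positivity) hne
  have hsplit : log ((E + 1) / 2) = log ((E + 1) / (2 * E)) + φ₀ := by
    have h2 : (E + 1) / 2 = ((E + 1) / (2 * E)) * E := by field_simp
    rw [h2, log_mul (by positivity) hE0.ne', hE, log_exp]
  have heq : (E + 1) / (2 * E) - 1 = (1 - E) / (2 * E) := by field_simp; ring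
  have hfrac : φ₀ / (1 + E) ≤ (E - 1) / (2 * E) := by
    rw [div_le_div_iff₀ (by positivity) (by positivity)]
    nlinarith
  have hfin : (E - 1) / (2 * E) = -((1 - E) / (2 * E)) := by ring
  rw [hc, hlog2, hsplit]
  rw [hfin] at hfrac
  linarith [hlogbound, hfrac, heq]

lemma f_concave {φ₀ : ℝ} (hφ₀ : 0 < φ₀) : ConcaveOn ℝ Set.univ (f φ₀) := by
  have hdiff : Differentiable ℝ (f φ₀) := fun x => (hasDerivAt_f φ₀ x).differentiableAt
  have hderiv : deriv (f φ₀) = f' φ₀ := funext fun x => (hasDerivAt_f φ₀ x).deriv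
  exact Antitone.concaveOn_univ_of_deriv hdiff (hderiv ▸ (f'_strictAnti hφ₀).antitone)

lemma f'_neg_one {φ₀ : ℝ} : f' φ₀ (-1) = -log (1 + exp (-φ₀)) - φ₀ / (1 + exp φ₀) := by
  unfold f'; norm_num

/-- slope lower bound on the left branch: slopes there exceed `-log 2`. -/
lemma slope_lb {φ₀ : ℝ} (hφ₀ : 0 < φ₀) {x y : ℝ} (hxy : x ≤ y) (hy : y ≤ -1) :
    -log 2 * (y - x) ≤ f φ₀ y - f φ₀ x := by
  have hmono : StrictMonoOn (fun t => f φ₀ t + Real.log 2 * t) (Set.Iic (-1:ℝ)) := by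
    apply strictMonoOn_of_deriv_pos (convex_Iic _)
    · have hc : Continuous (fun t => f φ₀ t + Real.log 2 * t) := by
        have : Differentiable ℝ (f φ₀) := fun x => (hasDerivAt_f φ₀ x).differentiableAt
        exact this.continuous.add (continuous_const.mul continuous_id)
      exact hc.continuousOn
    · intro t ht
      rw [interior_Iic] at ht
      have hlin : HasDerivAt (fun t : ℝ => Real.log 2 * t) (Real.log 2) t := by
        simpa using (hasDerivAt_id t).const_mul (Real.log 2)
      have hd : HasDerivAt (fun t => f φ₀ t + Real.log 2 * t) (f' φ₀ t + Real.log 2) t :=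
        (hasDerivAt_f φ₀ t).add hlin
      rw [hd.deriv]
      have h1 : f' φ₀ (-1) < f' φ₀ t := f'_strictAnti hφ₀ ht
      have h2 : -Real.log 2 < f' φ₀ (-1) := by rw [f'_neg_one]; exact key4 hφ₀
      linarith
  rcases eq_or_lt_of_le hxy with rfl | hxy'
  · simp
  · have hx : x ∈ Set.Iic (-1:ℝ) := le_trans hxy hy
    have := hmono hx hy hxy'
    simp only at this
    linarith

/-- product form of concavity slopes of f. -/
lemma fslope {φ₀ : ℝ} (hφ₀ : 0 < φ₀) {x y z : ℝ} (hxy : x < y) (hyz : y < z) :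
    (f φ₀ z - f φ₀ y) * (y - x) ≤ (f φ₀ y - f φ₀ x) * (z - y) := by
  have h := (f_concave hφ₀).slope_anti_adjacent (Set.mem_univ x) (Set.mem_univ z) hxy hyz
  rw [div_le_div_iff₀ (by linarith) (by linarith)] at h
  linarith

lemma P0_eq_f {φ₀ θ : ℝ} (hθ : θ ≤ -1) : P0 φ₀ θ = f φ₀ θ := by
  rcases lt_or_eq_of_le hθ with h | rfl
  · rw [P0, if_pos h]; rfl
  · rw [P0, if_neg (lt_irrefl _), if_pos rfl]
    unfold f; norm_num

lemma P0_eq_g {φ₀ θ : ℝ} (hθ : -1 ≤ θ) : P0 φ₀ θ = -(θ + 1) * Real.log 2 := by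
  rcases eq_or_lt_of_le hθ with rfl | h
  · rw [P0, if_neg (lt_irrefl _), if_pos rfl]; norm_num
  · rw [P0, if_neg (by linarith), if_neg (by linarith)]

end Stmt13Aux

open Stmt13Aux

theorem stmt_13 (φ₀ : ℝ) (hφ₀ : 0 < φ₀) :
    ConcaveOn ℝ Set.univ (P0 φ₀) ∧
    (∀ θ < (-1:ℝ), HasDerivAt (P0 φ₀)
        (- Real.log (1 + Real.exp (-φ₀)) - φ₀ / (1 + Real.exp (-θ * φ₀))) θ) ∧
    StrictAntiOn (fun θ : ℝ => - Real.log (1 + Real.exp (-φ₀)) - φ₀ / (1 + Real.exp (-θ * φ₀)))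
      (Set.Iio (-1:ℝ)) ∧
    - Real.log (1 + Real.exp (-φ₀)) - φ₀ / (1 + Real.exp φ₀) > - Real.log 2 := by
  refine ⟨?_, ?_, ?_, key4 hφ₀⟩
  · -- concavity
    rw [concaveOn_iff_slope_anti_adjacent]
    refine ⟨convex_univ, fun x y z _ _ hxy hyz => ?_⟩
    rw [div_le_div_iff₀ (by linarith) (by linarith)]
    -- goal : (P0 z - P0 y) * (y - x) ≤ (P0 y - P0 x) * (z - y)
    set L := Real.log 2 with hL
    rcases le_or_gt z (-1) with hz | hz
    · -- all points ≤ -1 : use concavity of f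
      rw [P0_eq_f hz, P0_eq_f (by linarith : y ≤ -1), P0_eq_f (by linarith : x ≤ -1)]
      exact fslope hφ₀ hxy hyz
    rcases le_or_gt (-1) x with hx | hx
    · -- all points ≥ -1 : linear
      rw [P0_eq_g (by linarith : (-1:ℝ) ≤ z), P0_eq_g (by linarith : (-1:ℝ) ≤ y),
        P0_eq_g hx]
      nlinarith [sq_nonneg (y - x), sq_nonneg (z - y)]
    -- x < -1 < z
    rcases le_or_gt y (-1) with hy | hy
    · -- x < y ≤ -1 < z
      rw [P0_eq_g hz.le, P0_eq_f hy, P0_eq_f (by linarith : x ≤ -1)]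
      have hB : -L * (y - x) ≤ f φ₀ y - f φ₀ x := slope_lb hφ₀ hxy.le hy
      have hC : (0 - f φ₀ y) * (y - x) ≤ (f φ₀ y - f φ₀ x) * (-1 - y) := by
        rcases eq_or_lt_of_le hy with rfl | hy'
        · have h0 : f φ₀ (-1) = 0 := by unfold f; norm_num
          simp [h0]
        · have h0 : f φ₀ (-1) = 0 := by unfold f; norm_num
          have := fslope hφ₀ hxy hy'
          rw [h0] at this; linarith
      have hz1 : (0:ℝ) < z + 1 := by linarith
      nlinarith [mul_le_mul_of_nonneg_right hB hz1.le]
    · -- x < -1 < y < z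
      rw [P0_eq_g hz.le, P0_eq_g hy.le, P0_eq_f hx.le]
      have h0 : f φ₀ (-1) = 0 := by unfold f; norm_num
      have hB : -L * (-1 - x) ≤ f φ₀ (-1) - f φ₀ x := slope_lb hφ₀ (by linarith) le_rfl
      rw [h0] at hB
      have hkey : -L * (y - x) ≤ -(y + 1) * L - f φ₀ x := by nlinarith
      nlinarith [mul_le_mul_of_nonneg_right hkey (by linarith : (0:ℝ) ≤ z - y)]
  · -- derivative
    intro θ hθ
    have hev : P0 φ₀ =ᶠ[nhds θ] f φ₀ := by
      filter_upwards [Iio_mem_nhds hθ] with t ht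
      exact P0_eq_f (le_of_lt ht)
    exact (hasDerivAt_f φ₀ θ).congr_of_eventuallyEq hev
  · -- strict antitonicity
    exact fun a _ b _ hab => f'_strictAnti hφ₀ hab
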